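/- Let g be twice differentiable on (0,∞) with g'(μ) ≥ 0 and g''(μ) ≤ 0 for all μ > 0, let β1 ≥ 0, β2 > 0, and fix 0 < z1 < z3. Define D(z2) = g'(β1 + β2*z2) * h(z2)^2 where h(z2) = z1*z2*log(z2/z1) - z1*z3*log(z3/z1) + z2*z3*log(z3/z2). Then there exists z2* in the half-open interval (z1, z2^0] with D'(z2*) = 0, where log(z2^0) = [z3*log(z3) - z1*log(z1)]/(z3-z1) - 1. -/

import Mathlib

theorem stmt_13 (g g' g'' : ℝ → ℝ)
    (hg : ∀ μ > (0:ℝ), HasDerivAt g (g' μ) μ)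
    (hg' : ∀ μ > (0:ℝ), HasDerivAt g' (g'' μ) μ)
    (hg'nonneg : ∀ μ > (0:ℝ), 0 ≤ g' μ)
    (hg''nonpos : ∀ μ > (0:ℝ), g'' μ ≤ 0)
    (β1 β2 : ℝ) (hβ1 : 0 ≤ β1) (hβ2 : 0 < β2)
    (z1 z3 : ℝ) (hz1 : 0 < z1) (hz13 : z1 < z3) :
    let h : ℝ → ℝ := fun z2 => z1 * z2 * Real.log (z2 / z1) - z1 * z3 * Real.log (z3 / z1)
      + z2 * z3 * Real.log (z3 / z2)
    let D : ℝ → ℝ := fun z2 => g' (β1 + β2 * z2) * (h z2) ^ 2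
    let z20 : ℝ := Real.exp ((z3 * Real.log z3 - z1 * Real.log z1) / (z3 - z1) - 1)
    ∃ z2 ∈ Set.Ioc z1 z20, deriv D z2 = 0 := by
  intro h D z20
  have hz3 : (0:ℝ) < z3 := hz1.trans hz13
  have hd : (0:ℝ) < z3 - z1 := by linarith
  set h' : ℝ → ℝ := fun z => z1 * Real.log (z / z1) + z1 + z3 * Real.log (z3 / z) - z3 with hh'def
  -- derivative of h
  have hder_h : ∀ z > (0:ℝ), HasDerivAt h (h' z) z := by
    intro z hz
    have l1 : HasDerivAt (fun z : ℝ => Real.log (z / z1)) (1 / z) z := by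
      have := (HasDerivAt.div_const (hasDerivAt_id z) z1).log
        (div_ne_zero hz.ne' hz1.ne')
      refine this.congr_deriv ?_
      simp only [id_eq] at this ⊢
      field_simp
    have l2 : HasDerivAt (fun z : ℝ => Real.log (z3 / z)) (-(1 / z)) z := by
      have hinner : HasDerivAt (fun z : ℝ => z3 / z) (-z3 / z ^ 2) z := by
        have h2 : HasDerivAt (fun z : ℝ => z3 / z) (z3 * -(z ^ 2)⁻¹) z := by
          simp only [div_eq_mul_inv]
          exact (hasDerivAt_inv hz.ne').const_mul z3
        convert h2 using 1
        field_simp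
      have := hinner.log (div_ne_zero hz3.ne' hz.ne')
      convert this using 1
      field_simp
    have t1 : HasDerivAt (fun z : ℝ => z1 * z * Real.log (z / z1))
        (z1 * Real.log (z / z1) + z1 * z * (1 / z)) z := by
      simpa using ((hasDerivAt_id z).const_mul z1).fun_mul l1
    have t2 : HasDerivAt (fun z : ℝ => z * z3 * Real.log (z3 / z))
        (z3 * Real.log (z3 / z) + z * z3 * (-(1 / z))) z := by
      have := ((hasDerivAt_id z).mul_const z3).fun_mul l2
      refine this.congr_deriv ?_
      simp only [id_eq]
      ring
    have := (t1.sub_const (z1 * z3 * Real.log (z3 / z1))).fun_add t2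
    refine this.congr_deriv ?_
    simp only [hh'def]
    field_simp
    ring
  set μ : ℝ → ℝ := fun z => β1 + β2 * z with hμdef
  have hμpos : ∀ z > (0:ℝ), 0 < μ z := fun z hz => by
    have : 0 < β2 * z := mul_pos hβ2 hz
    simp only [hμdef]; linarith
  set D' : ℝ → ℝ := fun z => β2 * g'' (μ z) * (h z) ^ 2 + g' (μ z) * (2 * h z * h' z)
    with hD'def
  have hder_D : ∀ z > (0:ℝ), HasDerivAt D (D' z) z := by
    intro z hz
    have hμz : HasDerivAt μ β2 z := by
      simpa [hμdef] using ((hasDerivAt_id z).const_mul β2).const_add β1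
    have hg'c : HasDerivAt (fun z => g' (μ z)) (g'' (μ z) * β2) z :=
      (hg' (μ z) (hμpos z hz)).comp z hμz
    have hh2 : HasDerivAt (fun z => (h z) ^ 2) (2 * h z * h' z) z := by
      simpa [pow_two] using (hder_h z hz).fun_pow 2
    have := hg'c.fun_mul hh2
    refine this.congr_deriv ?_
    simp only [hD'def]
    ring
  -- key values
  have hlog20 : Real.log z20 = (z3 * Real.log z3 - z1 * Real.log z1) / (z3 - z1) - 1 :=
    Real.log_exp _
  have hz20pos : (0:ℝ) < z20 := Real.exp_pos _
  have hz1z20 : z1 < z20 := by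
    have key : z1 / z3 - 1 > Real.log (z1 / z3) := by
      have := Real.log_lt_sub_one_of_pos (div_pos hz1 hz3) (by
        intro hcon
        have : z1 = z3 := by field_simp at hcon; linarith
        linarith)
      linarith
    have hlog13 : Real.log (z1 / z3) = Real.log z1 - Real.log z3 :=
      Real.log_div hz1.ne' hz3.ne'
    rw [hlog13] at key
    have : Real.log z1 < Real.log z20 := by
      rw [hlog20]
      rw [div_sub_one hd.ne', lt_div_iff₀ hd]
      have h1 : z3 * (Real.log z1 - Real.log z3) < z3 * (z1 / z3 - 1) :=
        (mul_lt_mul_iff_right₀ hz3).2 key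
      have h2 : z3 * (z1 / z3 - 1) = z1 - z3 := by field_simp
      nlinarith
    calc z1 = Real.exp (Real.log z1) := (Real.exp_log hz1).symm
      _ < Real.exp (Real.log z20) := Real.exp_lt_exp.2 this
      _ = z20 := Real.exp_log hz20pos
  have hh'z20 : h' z20 = 0 := by
    simp only [hh'def]
    rw [Real.log_div hz20pos.ne' hz1.ne', Real.log_div hz3.ne' hz20pos.ne', hlog20]
    field_simp
    ring
  have hhz1 : h z1 = 0 := by
    simp only [h, div_self hz1.ne', Real.log_one]
    ring
  have hDz1 : D z1 = 0 := by simp only [D, hhz1]; ring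
  have hDnonneg : ∀ z > (0:ℝ), 0 ≤ D z := fun z hz =>
    mul_nonneg (hg'nonneg _ (hμpos z hz)) (sq_nonneg _)
  have hD'z20 : D' z20 ≤ 0 := by
    simp only [hD'def, hh'z20, mul_zero, add_zero]
    have hgn := hg''nonpos (μ z20) (hμpos z20 hz20pos)
    nlinarith [mul_nonneg (mul_nonneg hβ2.le (neg_nonneg.2 hgn)) (sq_nonneg (h z20))]
  -- MVT on [z1, z20]
  have hIccpos : ∀ x ∈ Set.Icc z1 z20, (0:ℝ) < x := fun x hx => lt_of_lt_of_le hz1 hx.1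
  have hcont : ContinuousOn D (Set.Icc z1 z20) := fun x hx =>
    ((hder_D x (hIccpos x hx)).continuousAt).continuousWithinAt
  obtain ⟨c, hcmem, hcslope⟩ := exists_hasDerivAt_eq_slope D D' hz1z20 hcont
    (fun x hx => hder_D x (hIccpos x ⟨hx.1.le, hx.2.le⟩))
  have hD'c : 0 ≤ D' c := by
    rw [hcslope, hDz1, sub_zero]
    exact div_nonneg (hDnonneg z20 hz20pos) (by linarith [hcmem.1, hcmem.2])
  -- Darboux on [c, z20] for -D
  have hcz20 : c ≤ z20 := hcmem.2.le
  have hsub : Set.Icc c z20 ⊆ Set.Icc z1 z20 :=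
    Set.Icc_subset_Icc hcmem.1.le le_rfl
  have hdarb := exists_hasDerivWithinAt_eq_of_ge_of_le (f := fun x => -D x)
    (f' := fun x => -D' x) hcz20
    (fun x hx => ((hder_D x (hIccpos x (hsub hx))).neg).hasDerivWithinAt)
    (m := 0) (by simpa using hD'c) (by simpa using hD'z20)
  obtain ⟨x, hxmem, hx⟩ := hdarb
  refine ⟨x, ⟨lt_of_lt_of_le hcmem.1 hxmem.1, hxmem.2⟩, ?_⟩
  have hx0 : D' x = 0 := by simpa [neg_eq_zero] using hx
  rw [(hder_D x (hIccpos x (hsub hxmem))).deriv, hx0]
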